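/- Let P be a maximal ranked poset of rank n and let I and J be poset ideals of P with I ≠ J. Then the pair {I, J} belongs to E*_O(P) if and only if one of the two ideals is the empty set and the other one, say J, is connected in P and has at least two maximal elements (|max(J)| ≥ 2). -/

import Mathlib

open Finset
open scoped Classical

variable (P : Type*) [Fintype P] [PartialOrder P]

/-- The comparability graph of a poset. -/
def compGraph : SimpleGraph P where
  Adj x y := x ≠ y ∧ (x ≤ y ∨ y ≤ x)
  symm := ⟨fun _ _ h => ⟨h.1.symm, h.2.symm⟩⟩
  loopless := ⟨fun _ h => h.1 rfl⟩

/-- A subset `W` of `P` is connected in `P` if the subgraph of the comparability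
graph induced on `W` is connected (this includes `W` being nonempty). -/
def ConnIn (W : Set P) : Prop :=
  (SimpleGraph.induce W (compGraph P)).Connected

/-- A poset ideal (down-set). -/
def IsIdealF (I : Finset P) : Prop :=
  ∀ ⦃x y : P⦄, x ∈ I → y ≤ x → y ∈ I

/-- An antichain of the poset. -/
def IsAntichainF (A : Finset P) : Prop :=
  IsAntichain (· ≤ ·) (↑A : Set P)

/-- The 0/1 indicator vector of a subset of `P`. -/
noncomputable def rho (W : Finset P) : P → ℝ :=
  fun x => if x ∈ W then 1 else 0

/-- The order polytope of `P`. -/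
def orderPolytope : Set (P → ℝ) :=
  {f | (∀ x, 0 ≤ f x ∧ f x ≤ 1) ∧ ∀ ⦃x y : P⦄, x ≤ y → f y ≤ f x}

/-- The chain polytope of `P`. -/
def chainPolytope : Set (P → ℝ) :=
  {f | (∀ x, 0 ≤ f x) ∧ ∀ s : Finset P, IsChain (· ≤ ·) (↑s : Set P) → ∑ x ∈ s, f x ≤ 1}

/-- `conv {u, v}` is an edge (1-dimensional exposed face) of the polytope `S`. -/
def IsEdgeOf (S : Set (P → ℝ)) (u v : P → ℝ) : Prop :=
  u ≠ v ∧ IsExposed ℝ S (convexHull ℝ {u, v})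

/-- `conv {u, v, w}` is a triangular 2-face of the polytope `S`. -/
def IsTriFaceOf (S : Set (P → ℝ)) (u v w : P → ℝ) : Prop :=
  u ≠ v ∧ u ≠ w ∧ v ≠ w ∧ IsExposed ℝ S (convexHull ℝ {u, v, w})

/-- The set of maximal elements of a subset of `P`. -/
noncomputable def maxSet (W : Finset P) : Finset P :=
  W.filter (fun x => ∀ y ∈ W, ¬ x < y)

/-- The set of minimal elements of a subset of `P`. -/
noncomputable def minSet (W : Finset P) : Finset P :=
  W.filter (fun x => ∀ y ∈ W, ¬ y < x)

/-- The poset ideal generated by a subset of `P`. -/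
noncomputable def genIdeal (A : Finset P) : Finset P :=
  univ.filter (fun x => ∃ a ∈ A, x ≤ a)

/-- The pair `{I, J}` belongs to `E*_O(P)`. -/
noncomputable def EstarO (I J : Finset P) : Prop :=
  IsIdealF P I ∧ IsIdealF P J ∧ I ≠ J ∧
    IsEdgeOf P (orderPolytope P) (rho P I) (rho P J) ∧
    ¬ IsEdgeOf P (chainPolytope P) (rho P (maxSet P I)) (rho P (maxSet P J))

/-- The pair `{A, B}` belongs to `E*_C(P)`. -/
noncomputable def EstarC (A B : Finset P) : Prop :=
  IsAntichainF P A ∧ IsAntichainF P B ∧ A ≠ B ∧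
    IsEdgeOf P (chainPolytope P) (rho P A) (rho P B) ∧
    ¬ IsEdgeOf P (orderPolytope P) (rho P (genIdeal P A)) (rho P (genIdeal P B))

/-- `Δ_O(P)`: unordered triples of pairwise distinct poset ideals spanning a
triangular 2-face of the order polytope. -/
def DeltaO : Set (Finset (Finset P)) :=
  {T | ∃ I J K : Finset P, T = {I, J, K} ∧ I ≠ J ∧ I ≠ K ∧ J ≠ K ∧
    IsIdealF P I ∧ IsIdealF P J ∧ IsIdealF P K ∧
    IsTriFaceOf P (orderPolytope P) (rho P I) (rho P J) (rho P K)}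

/-- `Δ_C(P)`: unordered triples of pairwise distinct antichains spanning a
triangular 2-face of the chain polytope. -/
def DeltaC : Set (Finset (Finset P)) :=
  {T | ∃ A B C : Finset P, T = {A, B, C} ∧ A ≠ B ∧ A ≠ C ∧ B ≠ C ∧
    IsAntichainF P A ∧ IsAntichainF P B ∧ IsAntichainF P C ∧
    IsTriFaceOf P (chainPolytope P) (rho P A) (rho P B) (rho P C)}

/-- `Δ*_O(P)`: triples in `Δ_O(P)` at least one of whose pairs lies in `E*_O(P)`. -/
def DeltaStarO : Set (Finset (Finset P)) :=
  {T | T ∈ DeltaO P ∧ ∃ I ∈ T, ∃ J ∈ T, I ≠ J ∧ EstarO P I J}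

/-- `Δ*_C(P)`: triples in `Δ_C(P)` at least one of whose pairs lies in `E*_C(P)`. -/
def DeltaStarC : Set (Finset (Finset P)) :=
  {T | T ∈ DeltaC P ∧ ∃ A ∈ T, ∃ B ∈ T, A ≠ B ∧ EstarC P A B}

/-- `r` is a rank function exhibiting `P` as a maximal ranked poset of rank `n`:
`r` is surjective onto `{0, …, n}` and `x < y ↔ r x < r y`. -/
def IsMaxRanked (r : P → ℕ) (n : ℕ) : Prop :=
  (∀ x, r x ≤ n) ∧ (∀ i, i ≤ n → ∃ x, r x = i) ∧ (∀ x y : P, x < y ↔ r x < r y)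

/-- The rank level `P_i`. -/
noncomputable def level (r : P → ℕ) (i : ℕ) : Finset P :=
  univ.filter (fun x => r x = i)

/-- `P` contains an `X`-poset as a subposet. -/
def ContainsX : Prop :=
  ∃ a b c d e : P,
    a ≠ b ∧ a ≠ c ∧ a ≠ d ∧ a ≠ e ∧ b ≠ c ∧ b ≠ d ∧ b ≠ e ∧ c ≠ d ∧ c ≠ e ∧ d ≠ e ∧
    a < c ∧ b < c ∧ c < d ∧ c < e ∧ ¬ a ≤ b ∧ ¬ b ≤ a ∧ ¬ d ≤ e ∧ ¬ e ≤ d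


section AuxLemmas
set_option linter.unusedSectionVars false
variable {P}

/-! ### basic rho lemmas -/

lemma rho_inj {A B : Finset P} (h : rho P A = rho P B) : A = B := by
  ext x
  have := congrFun h x
  by_cases hA : x ∈ A <;> by_cases hB : x ∈ B <;> simp_all [rho]

lemma rho_empty : rho P (∅ : Finset P) = 0 := by
  funext x; simp [rho]

lemma convex_orderPolytope : Convex ℝ (orderPolytope P) := by
  intro f hf g hg a b ha hb hab
  constructor
  · intro p
    have h1 := (hf.1 p).1; have h2 := (hf.1 p).2
    have h3 := (hg.1 p).1; have h4 := (hg.1 p).2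
    simp only [Pi.add_apply, Pi.smul_apply, smul_eq_mul]
    constructor <;> nlinarith
  · intro p q hpq
    have h1 := hf.2 hpq; have h2 := hg.2 hpq
    simp only [Pi.add_apply, Pi.smul_apply, smul_eq_mul]
    nlinarith

lemma convex_chainPolytope : Convex ℝ (chainPolytope P) := by
  intro f hf g hg a b ha hb hab
  constructor
  · intro p
    have h1 := hf.1 p; have h2 := hg.1 p
    simp only [Pi.add_apply, Pi.smul_apply, smul_eq_mul]
    positivity
  intro s hs
  have h1 := hf.2 s hs; have h2 := hg.2 s hs
  simp only [Pi.add_apply, Pi.smul_apply, smul_eq_mul]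
  rw [Finset.sum_add_distrib, ← Finset.mul_sum, ← Finset.mul_sum]
  nlinarith

lemma rho_mem_order {I : Finset P} (hI : IsIdealF P I) : rho P I ∈ orderPolytope P := by
  refine ⟨fun x => by by_cases h : x ∈ I <;> simp [rho, h], ?_⟩
  intro x y hxy
  by_cases hy : y ∈ I
  · have hx : x ∈ I := hI hy hxy
    simp [rho, hx, hy]
  · by_cases hx : x ∈ I <;> simp [rho, hx, hy]

lemma sum_rho_le_one {A : Finset P} (hA : IsAntichainF P A) (s : Finset P)
    (hs : IsChain (· ≤ ·) (↑s : Set P)) : ∑ x ∈ s, rho P A x ≤ 1 := by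
  have : ∑ x ∈ s, rho P A x = ((s.filter (fun x => x ∈ A)).card : ℝ) := by
    unfold rho; rw [Finset.sum_boole]
  rw [this]
  have hle : (s.filter (fun x => x ∈ A)).card ≤ 1 := by
    rw [Finset.card_le_one]
    intro a ha b hb
    simp only [Finset.mem_filter] at ha hb
    by_contra hne
    rcases hs (by exact_mod_cast ha.1) (by exact_mod_cast hb.1) hne with h | h
    · exact hA ha.2 hb.2 hne h
    · exact hA hb.2 ha.2 (Ne.symm hne) h
  exact_mod_cast hle


lemma rho_mem_chain {A : Finset P} (hA : IsAntichainF P A) : rho P A ∈ chainPolytope P :=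
  ⟨fun x => by by_cases h : x ∈ A <;> simp [rho, h], fun s hs => sum_rho_le_one hA s hs⟩

/-! ### segment / exposed face helpers -/

lemma mem_convpair {u v f : P → ℝ} {t : ℝ} (h0 : 0 ≤ t) (h1 : t ≤ 1)
    (hf : f = t • u + (1 - t) • v) : f ∈ convexHull ℝ ({u, v} : Set (P → ℝ)) := by
  rw [convexHull_pair]
  exact ⟨t, 1 - t, h0, by linarith, by ring, hf.symm⟩

lemma exists_of_mem_convpair {u v f : P → ℝ} (h : f ∈ convexHull ℝ ({u, v} : Set (P → ℝ))) :
    ∃ t : ℝ, 0 ≤ t ∧ t ≤ 1 ∧ f = t • u + (1 - t) • v := by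
  rw [convexHull_pair] at h
  obtain ⟨a, b, ha, hb, hab, hf⟩ := h
  exact ⟨a, ha, by linarith, by rw [← hf, show (1 : ℝ) - a = b by linarith]⟩

lemma mem_face_of_mid {S F : Set (P → ℝ)} (hexp : IsExposed ℝ S F) {x a b : P → ℝ}
    (hx : x ∈ F) (ha : a ∈ S) (hb : b ∈ S) (hab : a + b = (2 : ℝ) • x) : a ∈ F := by
  obtain ⟨l, hl⟩ := hexp ⟨x, hx⟩
  rw [hl] at hx ⊢
  obtain ⟨hxS, hmax⟩ := hx
  have h2 : l a + l b = 2 * l x := by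
    have := congrArg l hab
    rwa [map_add, map_smul, smul_eq_mul] at this
  have hla := hmax a ha
  have hlb := hmax b hb
  refine ⟨ha, fun y hy => ?_⟩
  have := hmax y hy
  linarith

/-! ### connectivity helpers -/

lemma const_on_conn {W : Set P} (hc : ConnIn P W) {f : P → ℝ}
    (hf : ∀ x ∈ W, ∀ y ∈ W, x < y → f x = f y) :
    ∀ x ∈ W, ∀ y ∈ W, f x = f y := by
  have key : ∀ (u v : W) (w : (SimpleGraph.induce W (compGraph P)).Walk u v),
      f ↑u = f ↑v := by
    intro u v w
    induction w with
    | nil => rfl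
    | @cons u' v' w' h p ih =>
      refine Eq.trans ?_ ih
      have hadj : (↑u' : P) ≠ ↑v' ∧ ((↑u' : P) ≤ ↑v' ∨ (↑v' : P) ≤ ↑u') := h
      obtain ⟨hne, hle | hle⟩ := hadj
      · exact hf _ u'.2 _ v'.2 (lt_of_le_of_ne hle (by exact_mod_cast hne))
      · exact (hf _ v'.2 _ u'.2 (lt_of_le_of_ne hle (by
          intro hh; exact hne (by exact_mod_cast hh.symm)))).symm
  intro x hx y hy
  obtain ⟨w⟩ := hc.preconnected ⟨x, hx⟩ ⟨y, hy⟩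
  exact key _ _ w

lemma card_le_one_of_conn_antichain {W : Finset P}
    (hA : IsAntichain (· ≤ ·) (↑W : Set P)) (hc : ConnIn P (↑W : Set P)) : W.card ≤ 1 := by
  rw [Finset.card_le_one]
  intro a ha b hb
  by_contra hab
  obtain ⟨w⟩ := hc.preconnected ⟨a, by exact_mod_cast ha⟩ ⟨b, by exact_mod_cast hb⟩
  cases w with
  | nil => exact hab (by simpa using rfl)
  | @cons _ c _ h p =>
    have hadj : a ≠ (↑c : P) ∧ (a ≤ (↑c : P) ∨ (↑c : P) ≤ a) := h
    obtain ⟨hne, hle | hle⟩ := hadj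
    · exact hA (by exact_mod_cast ha) c.2 (by exact_mod_cast hne) hle
    · exact hA c.2 (by exact_mod_cast ha) (by intro hh; exact hne (by exact_mod_cast hh.symm)) hle

/-! ### edge of the order polytope: empty ideal vs connected ideal -/

lemma isIdealF_empty : IsIdealF P (∅ : Finset P) := fun x _ hx _ => by simp at hx

lemma edge_O_empty {J : Finset P} (hJ : IsIdealF P J) (hJc : ConnIn P (↑J : Set P)) :
    IsEdgeOf P (orderPolytope P) (rho P (∅ : Finset P)) (rho P J) := by
  obtain ⟨j₀, hj₀⟩ : ∃ j, j ∈ J := by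
    obtain ⟨⟨j, hj⟩⟩ := hJc.nonempty
    exact ⟨j, by exact_mod_cast hj⟩
  have hsub : convexHull ℝ ({rho P ∅, rho P J} : Set (P → ℝ)) ⊆ orderPolytope P := by
    apply convexHull_min ?_ convex_orderPolytope
    rintro x hx
    rcases hx with rfl | hx
    · exact rho_mem_order isIdealF_empty
    · rw [Set.mem_singleton_iff] at hx; subst hx; exact rho_mem_order hJ
  constructor
  · intro h
    have := rho_inj h
    simp only [← this] at hj₀
    exact absurd hj₀ (by simp)
  intro _
  classical
  set D : Finset (P × P) := univ.filter (fun q => q.1 ∈ J ∧ q.2 ∈ J ∧ q.1 < q.2) with hD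
  set l : (P → ℝ) →L[ℝ] ℝ :=
    (∑ q ∈ D, (ContinuousLinearMap.proj (R := ℝ) (φ := fun _ : P => ℝ) q.2
        - ContinuousLinearMap.proj q.1))
      - ∑ p ∈ univ \ J, ContinuousLinearMap.proj (R := ℝ) (φ := fun _ : P => ℝ) p with hl
  have happ : ∀ f : P → ℝ, l f = (∑ q ∈ D, (f q.2 - f q.1)) - ∑ p ∈ univ \ J, f p := by
    intro f
    simp [hl, ContinuousLinearMap.sub_apply, ContinuousLinearMap.sum_apply,
      ContinuousLinearMap.proj_apply]
  have hterm1 : ∀ f ∈ orderPolytope P, ∀ q ∈ D, f q.2 - f q.1 ≤ 0 := by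
    intro f hf q hq
    simp only [hD, Finset.mem_filter] at hq
    have := hf.2 hq.2.2.2.le
    linarith
  have hmax : ∀ f ∈ orderPolytope P, l f ≤ 0 := by
    intro f hf
    rw [happ]
    have h1 : ∑ q ∈ D, (f q.2 - f q.1) ≤ 0 := Finset.sum_nonpos (hterm1 f hf)
    have h2 : 0 ≤ ∑ p ∈ univ \ J, f p := Finset.sum_nonneg (fun p _ => (hf.1 p).1)
    linarith
  refine ⟨l, Set.eq_of_subset_of_subset ?_ ?_⟩
  · intro f hfc
    refine ⟨hsub hfc, fun g hg => ?_⟩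
    obtain ⟨t, ht0, ht1, hft⟩ := exists_of_mem_convpair hfc
    have hf0 : l f = 0 := by
      rw [happ]
      have e1 : ∑ q ∈ D, (f q.2 - f q.1) = 0 := by
        apply Finset.sum_eq_zero
        intro q hq
        simp only [hD, Finset.mem_filter] at hq
        rw [hft, rho_empty]
        simp [rho, hq.2.1, hq.2.2.1]
      have e2 : ∑ p ∈ univ \ J, f p = 0 := by
        apply Finset.sum_eq_zero
        intro p hp
        simp only [Finset.mem_sdiff] at hp
        rw [hft, rho_empty]
        simp [rho, hp.2]
      rw [e1, e2]; ring
    rw [hf0]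
    exact hmax g hg
  · rintro f ⟨hfO, hfm⟩
    have h0 : l f = 0 := by
      refine le_antisymm (hmax f hfO) ?_
      have := hfm (rho P ∅) (rho_mem_order isIdealF_empty)
      rwa [rho_empty, map_zero] at this
    rw [happ] at h0
    have h1 : ∑ q ∈ D, (f q.2 - f q.1) ≤ 0 := Finset.sum_nonpos (hterm1 f hfO)
    have h2 : 0 ≤ ∑ p ∈ univ \ J, f p := Finset.sum_nonneg (fun p _ => (hfO.1 p).1)
    have hS1 : ∀ q ∈ D, f q.2 - f q.1 = 0 :=
      (Finset.sum_eq_zero_iff_of_nonpos (hterm1 f hfO)).mp (by linarith)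
    have hS2 : ∀ p ∈ univ \ J, f p = 0 :=
      (Finset.sum_eq_zero_iff_of_nonneg (fun p _ => (hfO.1 p).1)).mp (by linarith)
    have hconst : ∀ x ∈ (↑J : Set P), ∀ y ∈ (↑J : Set P), f x = f y := by
      apply const_on_conn hJc
      intro x hx y hy hxy
      have hmem : (x, y) ∈ D := by
        simp only [hD, Finset.mem_filter, Finset.mem_univ, true_and]
        exact ⟨by exact_mod_cast hx, by exact_mod_cast hy, hxy⟩
      have := hS1 _ hmem
      dsimp at this
      linarith
    have ht0 : 0 ≤ f j₀ := (hfO.1 j₀).1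
    have ht1 : f j₀ ≤ 1 := (hfO.1 j₀).2
    refine mem_convpair (t := 1 - f j₀) (by linarith) (by linarith) ?_
    funext p
    simp only [Pi.add_apply, Pi.smul_apply, smul_eq_mul, rho_empty, Pi.zero_apply]
    by_cases hp : p ∈ J
    · have := hconst p (by exact_mod_cast hp) j₀ (by exact_mod_cast hj₀)
      simp only [rho, hp, if_pos]
      rw [this]; ring
    · have := hS2 p (by simp [hp])
      simp only [rho, hp, if_neg, if_false]
      rw [this]; ring

/-! ### edges of the chain polytope -/

lemma chain_pair {a b : P} (hab : a < b) : IsChain (· ≤ ·) (↑({a, b} : Finset P) : Set P) := by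
  intro x hx y hy hxy
  simp only [Finset.coe_insert, Finset.coe_singleton, Set.mem_insert_iff,
    Set.mem_singleton_iff] at hx hy
  rcases hx with rfl | rfl <;> rcases hy with rfl | rfl <;>
    first | exact absurd rfl hxy | exact Or.inl hab.le | exact Or.inr hab.le

lemma chain_single (a : P) : IsChain (· ≤ ·) (↑({a} : Finset P) : Set P) := by
  intro x hx y hy hxy
  simp only [Finset.coe_singleton, Set.mem_singleton_iff] at hx hy
  subst hx; subst hy; exact absurd rfl hxy

lemma hsub_chain {A B : Finset P} (hA : IsAntichainF P A) (hB : IsAntichainF P B) :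
    convexHull ℝ ({rho P A, rho P B} : Set (P → ℝ)) ⊆ chainPolytope P := by
  apply convexHull_min ?_ convex_chainPolytope
  rintro x hx
  rcases hx with rfl | hx
  · exact rho_mem_chain hA
  · rw [Set.mem_singleton_iff] at hx; subst hx; exact rho_mem_chain hB

/-- L1: two disjoint nonempty antichains, every element of `A` below every element of `B`. -/
lemma edge_C_bipartite {A B : Finset P} (hA : IsAntichainF P A) (hB : IsAntichainF P B)
    (hAne : A.Nonempty) (hBne : B.Nonempty) (hlt : ∀ a ∈ A, ∀ b ∈ B, a < b) :
    IsEdgeOf P (chainPolytope P) (rho P A) (rho P B) := by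
  obtain ⟨a₀, ha₀⟩ := hAne
  obtain ⟨b₀, hb₀⟩ := hBne
  have hdisj : ∀ x, x ∈ A → x ∈ B → False := fun x hxA hxB =>
    lt_irrefl x (hlt x hxA x hxB)
  constructor
  · intro h
    have := rho_inj h
    exact hdisj a₀ ha₀ (this ▸ ha₀)
  intro _
  set l : (P → ℝ) →L[ℝ] ℝ :=
    (∑ q ∈ A ×ˢ B, (ContinuousLinearMap.proj (R := ℝ) (φ := fun _ : P => ℝ) q.1
        + ContinuousLinearMap.proj q.2))
      - ∑ p ∈ univ \ (A ∪ B), ContinuousLinearMap.proj (R := ℝ) (φ := fun _ : P => ℝ) p with hl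
  have happ : ∀ f : P → ℝ, l f = (∑ q ∈ A ×ˢ B, (f q.1 + f q.2)) - ∑ p ∈ univ \ (A ∪ B), f p := by
    intro f
    simp [hl, ContinuousLinearMap.sub_apply, ContinuousLinearMap.sum_apply,
      ContinuousLinearMap.proj_apply]
  have hterm1 : ∀ f ∈ chainPolytope P, ∀ q ∈ A ×ˢ B, f q.1 + f q.2 ≤ 1 := by
    rintro f hf ⟨a, b⟩ hq
    simp only [Finset.mem_product] at hq
    have hab : a < b := hlt a hq.1 b hq.2
    have := hf.2 {a, b} (chain_pair hab)
    rwa [Finset.sum_pair hab.ne] at this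
  have hmax : ∀ f ∈ chainPolytope P, l f ≤ ((A ×ˢ B).card : ℝ) := by
    intro f hf
    rw [happ]
    have h1 : ∑ q ∈ A ×ˢ B, (f q.1 + f q.2) ≤ ((A ×ˢ B).card : ℝ) := by
      calc ∑ q ∈ A ×ˢ B, (f q.1 + f q.2) ≤ ∑ _q ∈ A ×ˢ B, (1 : ℝ) :=
        Finset.sum_le_sum (hterm1 f hf)
      _ = ((A ×ˢ B).card : ℝ) := by simp
    have h2 : 0 ≤ ∑ p ∈ univ \ (A ∪ B), f p := Finset.sum_nonneg (fun p _ => hf.1 p)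
    linarith
  have hsegval : ∀ t : ℝ, l (t • rho P A + (1 - t) • rho P B) = ((A ×ˢ B).card : ℝ) := by
    intro t
    rw [happ]
    have e1 : ∑ q ∈ A ×ˢ B, ((t • rho P A + (1 - t) • rho P B) q.1
        + (t • rho P A + (1 - t) • rho P B) q.2) = ∑ _q ∈ A ×ˢ B, (1 : ℝ) := by
      apply Finset.sum_congr rfl
      rintro ⟨a, b⟩ hq
      simp only [Finset.mem_product] at hq
      have haB : a ∉ B := fun h => hdisj a hq.1 h
      have hbA : b ∉ A := fun h => hdisj b h hq.2
      simp only [Pi.add_apply, Pi.smul_apply, smul_eq_mul, rho, hq.1, hq.2, haB, hbA,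
        if_pos, if_neg, if_false]
      ring
    have e2 : ∑ p ∈ univ \ (A ∪ B), (t • rho P A + (1 - t) • rho P B) p = 0 := by
      apply Finset.sum_eq_zero
      intro p hp
      simp only [Finset.mem_sdiff, Finset.mem_union] at hp
      push_neg at hp
      simp [rho, hp.2.1, hp.2.2]
    rw [e1, e2]
    simp
  refine ⟨l, Set.eq_of_subset_of_subset ?_ ?_⟩
  · intro f hfc
    refine ⟨hsub_chain hA hB hfc, fun g hg => ?_⟩
    obtain ⟨t, ht0, ht1, hft⟩ := exists_of_mem_convpair hfc
    rw [hft, hsegval t]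
    exact hmax g hg
  · rintro f ⟨hfC, hfm⟩
    have h0 : l f = ((A ×ˢ B).card : ℝ) := by
      refine le_antisymm (hmax f hfC) ?_
      have hin : rho P A ∈ chainPolytope P := rho_mem_chain hA
      have := hfm (rho P A) hin
      have hval : l (rho P A) = ((A ×ˢ B).card : ℝ) := by
        have := hsegval 1
        simpa using this
      linarith [hfm (rho P A) hin]
    rw [happ] at h0
    have h2 : 0 ≤ ∑ p ∈ univ \ (A ∪ B), f p := Finset.sum_nonneg (fun p _ => hfC.1 p)
    have h1 : ∑ q ∈ A ×ˢ B, (f q.1 + f q.2) ≤ ((A ×ˢ B).card : ℝ) := by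
      calc ∑ q ∈ A ×ˢ B, (f q.1 + f q.2) ≤ ∑ _q ∈ A ×ˢ B, (1 : ℝ) :=
        Finset.sum_le_sum (hterm1 f hfC)
      _ = ((A ×ˢ B).card : ℝ) := by simp
    have hS1 : ∀ q ∈ A ×ˢ B, f q.1 + f q.2 = 1 := by
      have hz : ∑ q ∈ A ×ˢ B, (1 - (f q.1 + f q.2)) = 0 := by
        rw [Finset.sum_sub_distrib]
        simp only [Finset.sum_const, nsmul_eq_mul, mul_one]
        linarith
      have := (Finset.sum_eq_zero_iff_of_nonneg
        (fun q hq => by linarith [hterm1 f hfC q hq])).mp hz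
      intro q hq
      have := this q hq
      linarith
    have hS2 : ∀ p ∈ univ \ (A ∪ B), f p = 0 :=
      (Finset.sum_eq_zero_iff_of_nonneg (fun p _ => hfC.1 p)).mp (by linarith)
    set t := f a₀ with htdef
    have htb : ∀ b ∈ B, f b = 1 - t := by
      intro b hb
      have := hS1 (a₀, b) (Finset.mem_product.mpr ⟨ha₀, hb⟩)
      dsimp at this
      linarith
    have hta : ∀ a ∈ A, f a = t := by
      intro a ha
      have := hS1 (a, b₀) (Finset.mem_product.mpr ⟨ha, hb₀⟩)
      have hb := htb b₀ hb₀
      dsimp at this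
      linarith
    have ht0 : 0 ≤ t := hfC.1 a₀
    have ht1 : t ≤ 1 := by
      have := hfC.1 b₀
      have := htb b₀ hb₀
      linarith
    refine mem_convpair ht0 ht1 ?_
    funext p
    simp only [Pi.add_apply, Pi.smul_apply, smul_eq_mul]
    by_cases hpA : p ∈ A
    · have hpB : p ∉ B := fun h => hdisj p hpA h
      simp only [rho, hpA, hpB, if_pos, if_neg, if_false]
      rw [hta p hpA]; ring
    · by_cases hpB : p ∈ B
      · simp only [rho, hpA, hpB, if_pos, if_neg, if_false]
        rw [htb p hpB]; ring
      · have := hS2 p (by simp [hpA, hpB])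
        simp only [rho, hpA, hpB, if_neg, if_false]
        rw [this]; ring

/-- L2: antichains `A` and `insert w A`. -/
lemma edge_C_insert {A : Finset P} {w : P} (hw : w ∉ A)
    (hB : IsAntichainF P (insert w A)) :
    IsEdgeOf P (chainPolytope P) (rho P A) (rho P (insert w A)) := by
  have hA : IsAntichainF P A := by
    apply hB.subset
    intro x hx
    simp only [Finset.coe_insert, Set.mem_insert_iff]
    right; exact_mod_cast hx
  set B := insert w A with hBdef
  have hwB : w ∈ B := Finset.mem_insert_self w A
  constructor
  · intro h
    have := rho_inj h
    rw [← this] at hwB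
    exact hw hwB
  intro _
  set l : (P → ℝ) →L[ℝ] ℝ :=
    (∑ c ∈ A, ContinuousLinearMap.proj (R := ℝ) (φ := fun _ : P => ℝ) c)
      - ∑ p ∈ univ \ B, ContinuousLinearMap.proj (R := ℝ) (φ := fun _ : P => ℝ) p with hl
  have happ : ∀ f : P → ℝ, l f = (∑ c ∈ A, f c) - ∑ p ∈ univ \ B, f p := by
    intro f
    simp [hl, ContinuousLinearMap.sub_apply, ContinuousLinearMap.sum_apply,
      ContinuousLinearMap.proj_apply]
  have hterm1 : ∀ f ∈ chainPolytope P, ∀ c ∈ A, f c ≤ 1 := by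
    intro f hf c _
    have := hf.2 {c} (chain_single c)
    rwa [Finset.sum_singleton] at this
  have hmax : ∀ f ∈ chainPolytope P, l f ≤ (A.card : ℝ) := by
    intro f hf
    rw [happ]
    have h1 : ∑ c ∈ A, f c ≤ (A.card : ℝ) := by
      calc ∑ c ∈ A, f c ≤ ∑ _c ∈ A, (1 : ℝ) := Finset.sum_le_sum (hterm1 f hf)
      _ = (A.card : ℝ) := by simp
    have h2 : 0 ≤ ∑ p ∈ univ \ B, f p := Finset.sum_nonneg (fun p _ => hf.1 p)
    linarith
  have hsegval : ∀ t : ℝ, l (t • rho P A + (1 - t) • rho P B) = (A.card : ℝ) := by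
    intro t
    rw [happ]
    have e1 : ∑ c ∈ A, (t • rho P A + (1 - t) • rho P B) c = ∑ _c ∈ A, (1 : ℝ) := by
      apply Finset.sum_congr rfl
      intro c hc
      have hcB : c ∈ B := Finset.mem_insert_of_mem hc
      simp only [Pi.add_apply, Pi.smul_apply, smul_eq_mul, rho, hc, hcB, if_pos]
      ring
    have e2 : ∑ p ∈ univ \ B, (t • rho P A + (1 - t) • rho P B) p = 0 := by
      apply Finset.sum_eq_zero
      intro p hp
      simp only [Finset.mem_sdiff] at hp
      have hpA : p ∉ A := fun h => hp.2 (Finset.mem_insert_of_mem h)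
      simp [rho, hpA, hp.2]
    rw [e1, e2]
    simp
  refine ⟨l, Set.eq_of_subset_of_subset ?_ ?_⟩
  · intro f hfc
    refine ⟨hsub_chain hA hB hfc, fun g hg => ?_⟩
    obtain ⟨t, ht0, ht1, hft⟩ := exists_of_mem_convpair hfc
    rw [hft, hsegval t]
    exact hmax g hg
  · rintro f ⟨hfC, hfm⟩
    have h0 : l f = (A.card : ℝ) := by
      refine le_antisymm (hmax f hfC) ?_
      have hval : l (rho P A) = (A.card : ℝ) := by
        have := hsegval 1
        simpa using this
      have := hfm (rho P A) (rho_mem_chain hA)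
      linarith
    rw [happ] at h0
    have h2 : 0 ≤ ∑ p ∈ univ \ B, f p := Finset.sum_nonneg (fun p _ => hfC.1 p)
    have h1 : ∑ c ∈ A, f c ≤ (A.card : ℝ) := by
      calc ∑ c ∈ A, f c ≤ ∑ _c ∈ A, (1 : ℝ) := Finset.sum_le_sum (hterm1 f hfC)
      _ = (A.card : ℝ) := by simp
    have hS1 : ∀ c ∈ A, f c = 1 := by
      have hz : ∑ c ∈ A, (1 - f c) = 0 := by
        rw [Finset.sum_sub_distrib]
        simp only [Finset.sum_const, nsmul_eq_mul, mul_one]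
        linarith
      have := (Finset.sum_eq_zero_iff_of_nonneg
        (fun c hc => by linarith [hterm1 f hfC c hc])).mp hz
      intro c hc
      have := this c hc
      linarith
    have hS2 : ∀ p ∈ univ \ B, f p = 0 :=
      (Finset.sum_eq_zero_iff_of_nonneg (fun p _ => hfC.1 p)).mp (by linarith)
    set t := f w with htdef
    have ht0 : 0 ≤ t := hfC.1 w
    have ht1 : t ≤ 1 := by
      have := hfC.2 {w} (chain_single w)
      rwa [Finset.sum_singleton] at this
    refine mem_convpair (t := 1 - t) (by linarith) (by linarith) ?_
    funext p
    simp only [Pi.add_apply, Pi.smul_apply, smul_eq_mul]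
    by_cases hpA : p ∈ A
    · have hpB : p ∈ B := Finset.mem_insert_of_mem hpA
      simp only [rho, hpA, hpB, if_pos]
      rw [hS1 p hpA]; ring
    · by_cases hpw : p = w
      · subst hpw
        simp only [rho, hpA, hwB, if_pos, if_neg, if_false]
        ring_nf
        exact htdef.symm
      · have hpB : p ∉ B := by
          simp only [hBdef, Finset.mem_insert]
          push_neg
          exact ⟨hpw, hpA⟩
        have := hS2 p (by simp [hpB])
        simp only [rho, hpA, hpB, if_neg, if_false]
        rw [this]; ring

/-- An antichain with at least two elements does not give an edge with the origin. -/
lemma not_edge_C_two {B : Finset P} (hB : IsAntichainF P B) (hcard : 2 ≤ B.card) :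
    ¬ IsEdgeOf P (chainPolytope P) (rho P (∅ : Finset P)) (rho P B) := by
  rintro ⟨hne, hexp⟩
  obtain ⟨b₁, hb₁, b₂, hb₂, hb12⟩ := Finset.one_lt_card.mp (show 1 < B.card by omega)
  set m : P → ℝ := (1/2 : ℝ) • rho P B with hm
  have hmconv : m ∈ convexHull ℝ ({rho P ∅, rho P B} : Set (P → ℝ)) := by
    refine mem_convpair (t := 1/2) (by norm_num) (by norm_num) ?_
    funext p
    simp only [hm, rho_empty, Pi.add_apply, Pi.smul_apply, Pi.zero_apply, smul_eq_mul]
    ring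
  set a : P → ℝ := m + (1/4 : ℝ) • (rho P {b₁} - rho P {b₂}) with hadef
  set b : P → ℝ := m - (1/4 : ℝ) • (rho P {b₁} - rho P {b₂}) with hbdef
  have hbound : ∀ g : P → ℝ, (∀ p, 0 ≤ g p) → (∀ p, g p ≤ (3/4 : ℝ) * rho P B p) →
      g ∈ chainPolytope P := by
    intro g hg0 hgb
    refine ⟨hg0, fun s hs => ?_⟩
    calc ∑ x ∈ s, g x ≤ ∑ x ∈ s, (3/4 : ℝ) * rho P B x := Finset.sum_le_sum (fun x _ => hgb x)
    _ = (3/4 : ℝ) * ∑ x ∈ s, rho P B x := by rw [Finset.mul_sum]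
    _ ≤ (3/4 : ℝ) * 1 := by
        have := sum_rho_le_one hB s hs
        nlinarith
    _ ≤ 1 := by norm_num
  have haval : ∀ p, a p = (1/2 : ℝ) * rho P B p + (1/4 : ℝ) * (rho P {b₁} p - rho P {b₂} p) := by
    intro p; simp [hadef, hm]; try ring
  have hbval : ∀ p, b p = (1/2 : ℝ) * rho P B p - (1/4 : ℝ) * (rho P {b₁} p - rho P {b₂} p) := by
    intro p; simp [hbdef, hm]; try ring
  have hval : ∀ p, (0 ≤ a p ∧ a p ≤ (3/4 : ℝ) * rho P B p) ∧
      (0 ≤ b p ∧ b p ≤ (3/4 : ℝ) * rho P B p) := by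
    intro p
    rw [haval p, hbval p]
    have e1 : rho P {b₁} p = if p = b₁ then (1:ℝ) else 0 := by simp [rho]
    have e2 : rho P {b₂} p = if p = b₂ then (1:ℝ) else 0 := by simp [rho]
    rw [e1, e2]
    by_cases h1 : p = b₁
    · norm_num [rho, h1, hb₁, hb12]
    · by_cases h2 : p = b₂
      · norm_num [rho, h2, hb₂, Ne.symm hb12]
      · by_cases hpB : p ∈ B <;> norm_num [rho, h1, h2, hpB]
  have haC : a ∈ chainPolytope P := hbound a (fun p => (hval p).1.1) (fun p => (hval p).1.2)
  have hbC : b ∈ chainPolytope P := hbound b (fun p => (hval p).2.1) (fun p => (hval p).2.2)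
  have hab : a + b = (2 : ℝ) • m := by
    funext p
    simp only [hadef, hbdef, Pi.add_apply, Pi.sub_apply, Pi.smul_apply, smul_eq_mul]
    ring
  have haF := mem_face_of_mid hexp hmconv haC hbC hab
  obtain ⟨t, _, _, hat⟩ := exists_of_mem_convpair haF
  have h1 := congrFun hat b₁
  have h2 := congrFun hat b₂
  rw [haval] at h1 h2
  rw [rho_empty] at h1 h2
  simp only [rho, hb₁, hb₂, Finset.mem_singleton, hb12, Ne.symm hb12, if_pos, if_neg, if_false,
    Pi.add_apply, Pi.smul_apply, Pi.zero_apply, smul_eq_mul] at h1 h2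
  -- h1 : 1/2 + 1/4 = t * 0 + (1 - t) * 1, h2 : 1/2 - 1/4 = same
  have : b₂ ≠ b₁ := Ne.symm hb12
  norm_num at h1 h2
  linarith

/-! ### structure of edges of the order polytope (necessity) -/

lemma midpoint_split {I J K L : Finset P} (hK : IsIdealF P K) (hL : IsIdealF P L)
    (hsum : ∀ p, rho P K p + rho P L p = rho P I p + rho P J p)
    (hexp : IsExposed ℝ (orderPolytope P) (convexHull ℝ ({rho P I, rho P J} : Set (P → ℝ)))) :
    ∃ t : ℝ, 0 ≤ t ∧ t ≤ 1 ∧ rho P K = t • rho P I + (1 - t) • rho P J := by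
  have hm : ((1/2 : ℝ) • (rho P I + rho P J) : P → ℝ) ∈
      convexHull ℝ ({rho P I, rho P J} : Set (P → ℝ)) := by
    refine mem_convpair (t := 1/2) (by norm_num) (by norm_num) ?_
    funext p
    simp only [Pi.add_apply, Pi.smul_apply, smul_eq_mul]
    ring
  have hab : rho P K + rho P L = (2 : ℝ) • ((1/2 : ℝ) • (rho P I + rho P J)) := by
    funext p
    have := hsum p
    simp only [Pi.add_apply, Pi.smul_apply, smul_eq_mul]
    linarith
  have := mem_face_of_mid hexp hm (rho_mem_order hK) (rho_mem_order hL) hab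
  exact exists_of_mem_convpair this

lemma isIdealF_inter {I J : Finset P} (hI : IsIdealF P I) (hJ : IsIdealF P J) :
    IsIdealF P (I ∩ J) := by
  intro x y hx hyx
  simp only [Finset.mem_inter] at hx ⊢
  exact ⟨hI hx.1 hyx, hJ hx.2 hyx⟩

lemma isIdealF_union {I J : Finset P} (hI : IsIdealF P I) (hJ : IsIdealF P J) :
    IsIdealF P (I ∪ J) := by
  intro x y hx hyx
  simp only [Finset.mem_union] at hx ⊢
  rcases hx with h | h
  · exact Or.inl (hI h hyx)
  · exact Or.inr (hJ h hyx)

lemma subset_of_edge_O {I J : Finset P} (hI : IsIdealF P I) (hJ : IsIdealF P J)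
    (hedge : IsEdgeOf P (orderPolytope P) (rho P I) (rho P J)) : I ⊆ J ∨ J ⊆ I := by
  by_contra hcon
  push_neg at hcon
  obtain ⟨a, haI, haJ⟩ := Finset.not_subset.mp hcon.1
  obtain ⟨b, hbJ, hbI⟩ := Finset.not_subset.mp hcon.2
  have hsum : ∀ p, rho P (I ∪ J) p + rho P (I ∩ J) p = rho P I p + rho P J p := by
    intro p
    by_cases hpI : p ∈ I <;> by_cases hpJ : p ∈ J <;>
      simp [rho, hpI, hpJ, Finset.mem_union, Finset.mem_inter]
  obtain ⟨t, ht0, ht1, hKt⟩ := midpoint_split (isIdealF_union hI hJ) (isIdealF_inter hI hJ)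
    hsum hedge.2
  have h1 := congrFun hKt a
  have h2 := congrFun hKt b
  simp only [rho, Finset.mem_union, haI, haJ, hbJ, hbI, Pi.add_apply, Pi.smul_apply,
    smul_eq_mul, if_pos, if_neg, if_false, true_or, or_true, if_true, not_false_iff] at h1 h2
  -- h1 : 1 = t * 1 + (1 - t) * 0, h2 : 1 = t * 0 + (1 - t) * 1
  norm_num at h1 h2
  linarith

lemma conn_of_edge_O {I J : Finset P} (hI : IsIdealF P I) (hJ : IsIdealF P J)
    (hIJ : I ⊆ J) (hne : I ≠ J)
    (hedge : IsEdgeOf P (orderPolytope P) (rho P I) (rho P J)) :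
    ConnIn P (↑(J \ I) : Set P) := by
  set W := J \ I with hW
  have hWne : W.Nonempty := by
    rw [hW]
    rw [Finset.sdiff_nonempty]
    intro h
    exact hne (Finset.Subset.antisymm hIJ h)
  obtain ⟨w₀, hw₀⟩ := hWne
  have hw₀' : (w₀ : P) ∈ (↑W : Set P) := by exact_mod_cast hw₀
  set G := SimpleGraph.induce (↑W : Set P) (compGraph P) with hG
  set u₀ : (↑W : Set P) := ⟨w₀, hw₀'⟩ with hu₀
  set W₁ : Finset P := W.filter (fun x => ∃ hx : x ∈ (↑W : Set P), G.Reachable u₀ ⟨x, hx⟩)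
    with hW₁
  have hw₀W₁ : w₀ ∈ W₁ := by
    rw [hW₁, Finset.mem_filter]
    exact ⟨hw₀, hw₀', SimpleGraph.Reachable.refl _⟩
  -- any element of W comparable to an element of W₁ is in W₁
  have hstep : ∀ x ∈ W₁, ∀ y ∈ W, y ≠ x → (x ≤ y ∨ y ≤ x) → y ∈ W₁ := by
    intro x hx y hy hyx hcomp
    rw [hW₁, Finset.mem_filter] at hx ⊢
    obtain ⟨hxW', hreach⟩ := hx.2
    have hyW' : (y : P) ∈ (↑W : Set P) := by exact_mod_cast hy
    refine ⟨hy, hyW', ?_⟩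
    have hadj : G.Adj ⟨x, hxW'⟩ ⟨y, hyW'⟩ := by
      show (compGraph P).Adj x y
      exact (⟨Ne.symm hyx, hcomp⟩ : x ≠ y ∧ (x ≤ y ∨ y ≤ x))
    exact hreach.trans hadj.reachable
  have hW₁W : W₁ ⊆ W := Finset.filter_subset _ _
  by_cases hW₂ : (W \ W₁).Nonempty
  · exfalso
    set W₂ := W \ W₁ with hW₂def
    obtain ⟨w₂, hw₂⟩ := hW₂
    have hw₂W : w₂ ∈ W := (Finset.mem_sdiff.mp hw₂).1
    have hw₂n1 : w₂ ∉ W₁ := (Finset.mem_sdiff.mp hw₂).2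
    have hWJ : W ⊆ J := Finset.sdiff_subset
    have hWnI : ∀ x ∈ W, x ∉ I := fun x hx => (Finset.mem_sdiff.mp hx).2
    have hid1 : IsIdealF P (I ∪ W₁) := by
      intro x y hx hyx
      rw [Finset.mem_union] at hx ⊢
      rcases hx with hx | hx
      · exact Or.inl (hI hx hyx)
      · by_cases hyI : y ∈ I
        · exact Or.inl hyI
        · have hyJ : y ∈ J := hJ (hWJ (hW₁W hx)) hyx
          have hyW : y ∈ W := Finset.mem_sdiff.mpr ⟨hyJ, hyI⟩
          by_cases hxy : y = x
          · exact Or.inr (hxy ▸ hx)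
          · exact Or.inr (hstep x hx y hyW hxy (Or.inr hyx))
    have hid2 : IsIdealF P (I ∪ W₂) := by
      intro x y hx hyx
      rw [Finset.mem_union] at hx ⊢
      rcases hx with hx | hx
      · exact Or.inl (hI hx hyx)
      · have hxW : x ∈ W := (Finset.mem_sdiff.mp hx).1
        have hxn1 : x ∉ W₁ := (Finset.mem_sdiff.mp hx).2
        by_cases hyI : y ∈ I
        · exact Or.inl hyI
        · have hyJ : y ∈ J := hJ (hWJ hxW) hyx
          have hyW : y ∈ W := Finset.mem_sdiff.mpr ⟨hyJ, hyI⟩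
          by_cases hy1 : y ∈ W₁
          · exfalso
            by_cases hxy : x = y
            · exact hxn1 (hxy ▸ hy1)
            · exact hxn1 (hstep y hy1 x hxW hxy (Or.inl hyx))
          · exact Or.inr (Finset.mem_sdiff.mpr ⟨hyW, hy1⟩)
    have hsum : ∀ p, rho P (I ∪ W₁) p + rho P (I ∪ W₂) p = rho P I p + rho P J p := by
      intro p
      by_cases hpI : p ∈ I
      · have hpJ : p ∈ J := hIJ hpI
        simp [rho, Finset.mem_union, hpI, hpJ]
      · by_cases hpJ : p ∈ J
        · have hpW : p ∈ W := Finset.mem_sdiff.mpr ⟨hpJ, hpI⟩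
          by_cases hp1 : p ∈ W₁
          · have hp2 : p ∉ W₂ := by
              rw [hW₂def, Finset.mem_sdiff]
              push_neg
              intro _; exact hp1
            simp [rho, Finset.mem_union, hpI, hpJ, hp1, hp2]
          · have hp2 : p ∈ W₂ := Finset.mem_sdiff.mpr ⟨hpW, hp1⟩
            simp [rho, Finset.mem_union, hpI, hpJ, hp1, hp2]
        · have hpW : p ∉ W := fun h => hpJ (hWJ h)
          have hp1 : p ∉ W₁ := fun h => hpW (hW₁W h)
          have hp2 : p ∉ W₂ := fun h => hpW (Finset.mem_sdiff.mp h).1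
          simp [rho, Finset.mem_union, hpI, hpJ, hp1, hp2]
    obtain ⟨t, ht0, ht1, hKt⟩ := midpoint_split hid1 hid2 hsum hedge.2
    have h1 := congrFun hKt w₀
    have h2 := congrFun hKt w₂
    have hw₀I : w₀ ∉ I := hWnI w₀ hw₀
    have hw₀J : w₀ ∈ J := hWJ hw₀
    have hw₂I : w₂ ∉ I := hWnI w₂ hw₂W
    have hw₂J : w₂ ∈ J := hWJ hw₂W
    simp only [rho, Finset.mem_union, hw₀I, hw₀J, hw₂I, hw₂J, hw₀W₁, hw₂n1, Pi.add_apply,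
      Pi.smul_apply, smul_eq_mul, or_true, or_false, true_or, false_or, if_true, if_pos,
      if_neg, if_false, not_false_iff] at h1 h2
    norm_num at h1 h2
    linarith
  · rw [ConnIn, SimpleGraph.connected_iff]
    refine ⟨fun u v => ?_, ⟨u₀⟩⟩
    rw [Finset.not_nonempty_iff_eq_empty, Finset.sdiff_eq_empty_iff_subset] at hW₂
    have hmem : ∀ z : (↑W : Set P), G.Reachable u₀ z := by
      intro z
      have hz : (z : P) ∈ W₁ := hW₂ (by exact_mod_cast z.2)
      rw [hW₁, Finset.mem_filter] at hz
      obtain ⟨hzW', hreach⟩ := hz.2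
      have : (⟨(z : P), hzW'⟩ : (↑W : Set P)) = z := Subtype.ext rfl
      rwa [this] at hreach
    exact (hmem u).symm.trans (hmem v)

/-! ### maxSet lemmas -/

lemma maxSet_empty : maxSet P (∅ : Finset P) = ∅ := by
  simp [maxSet]

lemma maxSet_antichain (W : Finset P) : IsAntichainF P (maxSet P W) := by
  intro x hx y hy hxy hle
  simp only [Finset.coe_filter, maxSet, Set.mem_setOf_eq, Finset.mem_coe] at hx hy
  exact hx.2 y hy.1 (lt_of_le_of_ne hle hxy)

lemma maxSet_nonempty {W : Finset P} (hW : W.Nonempty) : (maxSet P W).Nonempty := by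
  obtain ⟨a, ha⟩ := Finset.exists_maximal hW
  exact ⟨a, Finset.mem_filter.mpr ⟨ha.1, fun y hy hlt => lt_irrefl _ (lt_of_lt_of_le hlt (ha.2 hy hlt.le))⟩⟩

lemma edge_symm {S : Set (P → ℝ)} {u v : P → ℝ} (h : IsEdgeOf P S u v) : IsEdgeOf P S v u :=
  ⟨h.1.symm, by rw [Set.pair_comm]; exact h.2⟩

lemma maxSet_ranked {r : P → ℕ} (hlt : ∀ x y : P, x < y ↔ r x < r y) {I : Finset P} (hI : IsIdealF P I) {x₀ : P} (hx₀I : x₀ ∈ I)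
    (hx₀max : ∀ y ∈ I, r y ≤ r x₀) :
    maxSet P I = I.filter (fun x => r x = r x₀) := by
  ext x
  simp only [maxSet, Finset.mem_filter]
  constructor
  · rintro ⟨hxI, hmax⟩
    refine ⟨hxI, ?_⟩
    by_contra hxk
    have hxlt : r x < r x₀ := lt_of_le_of_ne (hx₀max x hxI) hxk
    exact hmax x₀ hx₀I ((hlt x x₀).mpr hxlt)
  · rintro ⟨hxI, hxk⟩
    refine ⟨hxI, fun y hy hxy => ?_⟩
    have := (hlt x y).mp hxy
    have := hx₀max y hy
    omega

lemma main_forward_aux {r : P → ℕ} (hlt : ∀ x y : P, x < y ↔ r x < r y) {I J : Finset P} (hI : IsIdealF P I) (hJ : IsIdealF P J)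
    (hIJ : I ⊆ J) (hne : I ≠ J) (hconn : ConnIn P (↑(J \ I) : Set P))
    (hnedge : ¬ IsEdgeOf P (chainPolytope P) (rho P (maxSet P I)) (rho P (maxSet P J))) :
    I = ∅ ∧ ConnIn P (↑J : Set P) ∧ 2 ≤ (maxSet P J).card := by
  have hWne : (J \ I).Nonempty := by
    rw [Finset.sdiff_nonempty]
    intro h
    exact hne (Finset.Subset.antisymm hIJ h)
  have hJne : J.Nonempty := by
    obtain ⟨w, hw⟩ := hWne
    exact ⟨w, (Finset.mem_sdiff.mp hw).1⟩
  obtain ⟨y₀, hy₀J, hy₀max⟩ := J.exists_max_image r hJne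
  by_cases hIe : I = ∅
  · subst hIe
    rw [Finset.sdiff_empty] at hconn
    refine ⟨rfl, hconn, ?_⟩
    by_contra hcard
    push_neg at hcard
    have h1 : (maxSet P J).card = 1 := by
      have := Finset.card_pos.mpr (maxSet_nonempty hJne)
      omega
    obtain ⟨w, hw⟩ := Finset.card_eq_one.mp h1
    apply hnedge
    rw [maxSet_empty, hw]
    have : ({w} : Finset P) = insert w ∅ := by simp
    rw [this]
    exact edge_C_insert (by simp) (by rw [← this, ← hw]; exact maxSet_antichain J)
  · exfalso
    have hIne : I.Nonempty := Finset.nonempty_iff_ne_empty.mpr hIe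
    obtain ⟨x₀, hx₀I, hx₀max⟩ := I.exists_max_image r hIne
    have hkm : r x₀ ≤ r y₀ := hy₀max x₀ (hIJ hx₀I)
    have hSdef := maxSet_ranked hlt hI hx₀I hx₀max
    have hTdef := maxSet_ranked hlt hJ hy₀J hy₀max
    rcases lt_or_eq_of_le hkm with hkm' | hkm'
    · -- bipartite case
      apply hnedge
      apply edge_C_bipartite (maxSet_antichain I) (maxSet_antichain J)
        ⟨x₀, hSdef ▸ Finset.mem_filter.mpr ⟨hx₀I, rfl⟩⟩
        ⟨y₀, hTdef ▸ Finset.mem_filter.mpr ⟨hy₀J, rfl⟩⟩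
      intro a ha b hb
      rw [hSdef, Finset.mem_filter] at ha
      rw [hTdef, Finset.mem_filter] at hb
      exact (hlt a b).mpr (by omega)
    · -- same top rank
      set S := maxSet P I with hS
      set T := maxSet P J with hT
      have hST : S ⊆ T := by
        intro x hx
        rw [hSdef, Finset.mem_filter] at hx
        rw [hTdef, Finset.mem_filter]
        exact ⟨hIJ hx.1, by omega⟩
      have hJI : J \ I = T \ S := by
        ext x
        simp only [Finset.mem_sdiff]
        constructor
        · rintro ⟨hxJ, hxI⟩
          have hxm : r x ≤ r y₀ := hy₀max x hxJ
          have hxm' : r x = r y₀ := by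
            by_contra hxk
            have : x < x₀ := (hlt x x₀).mpr (by omega)
            exact hxI (hI hx₀I this.le)
          refine ⟨hTdef ▸ Finset.mem_filter.mpr ⟨hxJ, hxm'⟩, fun hc => ?_⟩
          rw [hSdef, Finset.mem_filter] at hc
          exact hxI hc.1
        · rintro ⟨hxT, hxS⟩
          rw [hTdef, Finset.mem_filter] at hxT
          refine ⟨hxT.1, fun hxI => ?_⟩
          exact hxS (hSdef ▸ Finset.mem_filter.mpr ⟨hxI, by omega⟩)
      rw [hJI] at hconn hWne
      have hTSanti : IsAntichain (· ≤ ·) (↑(T \ S) : Set P) := by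
        apply (maxSet_antichain J).subset
        rw [← hT]
        exact_mod_cast Finset.sdiff_subset
      have hcard1 : (T \ S).card = 1 := by
        have h1 := card_le_one_of_conn_antichain hTSanti hconn
        have h2 := Finset.card_pos.mpr hWne
        omega
      obtain ⟨w, hw⟩ := Finset.card_eq_one.mp hcard1
      have hwS : w ∉ S := by
        have : w ∈ T \ S := hw ▸ Finset.mem_singleton_self w
        exact (Finset.mem_sdiff.mp this).2
      have hTins : T = insert w S := by
        ext a
        simp only [Finset.mem_insert]
        constructor
        · intro haT
          by_cases haS : a ∈ S
          · exact Or.inr haS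
          · left
            have : a ∈ T \ S := Finset.mem_sdiff.mpr ⟨haT, haS⟩
            rw [hw, Finset.mem_singleton] at this
            exact this
        · rintro (rfl | haS)
          · exact (Finset.mem_sdiff.mp (hw ▸ Finset.mem_singleton_self a)).1
          · exact hST haS
      apply hnedge
      rw [hTins]
      exact edge_C_insert hwS (hTins ▸ (hT ▸ maxSet_antichain J))

end AuxLemmas

/-- In a maximal ranked poset, `{I, J} ∈ E*_O(P)` iff one of the two
ideals is empty and the other is connected with at least two maximal elements. -/
theorem mem_EstarO_iff
    (r : P → ℕ) (n : ℕ) (hr : IsMaxRanked P r n)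
    (I J : Finset P) (hI : IsIdealF P I) (hJ : IsIdealF P J) (hne : I ≠ J) :
    EstarO P I J ↔
      ((I = ∅ ∧ ConnIn P (↑J) ∧ 2 ≤ (maxSet P J).card) ∨
       (J = ∅ ∧ ConnIn P (↑I) ∧ 2 ≤ (maxSet P I).card)) := by
  have hlt := hr.2.2
  constructor
  · rintro ⟨-, -, -, hedgeO, hnC⟩
    rcases subset_of_edge_O hI hJ hedgeO with h | h
    · exact Or.inl (main_forward_aux hlt hI hJ h hne
        (conn_of_edge_O hI hJ h hne hedgeO) hnC)
    · exact Or.inr (main_forward_aux hlt hJ hI h (Ne.symm hne)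
        (conn_of_edge_O hJ hI h (Ne.symm hne) (edge_symm hedgeO))
        (fun hc => hnC (edge_symm hc)))
  · rintro (⟨hIe, hconn, hcard⟩ | ⟨hJe, hconn, hcard⟩)
    · subst hIe
      refine ⟨isIdealF_empty, hJ, hne, edge_O_empty hJ hconn, ?_⟩
      rw [maxSet_empty]
      exact not_edge_C_two (maxSet_antichain J) hcard
    · subst hJe
      refine ⟨hI, isIdealF_empty, hne, edge_symm (edge_O_empty hI hconn), ?_⟩
      rw [maxSet_empty]
      intro hc
      exact not_edge_C_two (maxSet_antichain I) hcard (edge_symm hc)
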